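/- Let V be a finite-dimensional vector space over a field k of characteristic 0, let A : V → V be linear, and let p be the square-free part of the characteristic polynomial χ_A, with M the least positive integer such that χ_A divides p^M. Then there exist polynomials r_1, …, r_{M−1} over k, each of degree strictly less than deg p, such that the operator S = A + Σ_{j=1}^{M−1} r_j(A) p(A)^j satisfies p(S) = 0. Consequently S is semisimple, S commutes with A, and N = A − S is nilpotent; thus A = S + N is the Jordan (Jordan–Chevalley) decomposition of A, with both S and N polynomials in A. -/

import Mathlib

open Polynomial

private lemma comp_sub_dvd' {k : Type*} [Field k] (f a b : k[X]) :
    (a - b) ∣ f.comp a - f.comp b := by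
  induction f using Polynomial.induction_on' with
  | add p q hp hq =>
    have h : (p + q).comp a - (p + q).comp b =
        (p.comp a - p.comp b) + (q.comp a - q.comp b) := by
      simp only [add_comp]; ring
    rw [h]
    exact dvd_add hp hq
  | monomial n c =>
    simp only [monomial_comp]
    have h : C c * a ^ n - C c * b ^ n = C c * (a ^ n - b ^ n) := by ring
    rw [h]
    exact Dvd.dvd.mul_left (sub_dvd_pow_sub_pow a b n) _

private lemma newton_lift' {k : Type*} [Field k] {p : k[X]}
    (hco : IsCoprime p (derivative p)) :
    ∀ m : ℕ, ∃ g : k[X], p ∣ g - X ∧ p ^ (m + 1) ∣ p.comp g := by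
  have key : ∀ g : k[X], p ∣ g - X → p ∣ p.comp g := by
    intro g hg
    have h1 : (g - X) ∣ p.comp g - p.comp X := comp_sub_dvd' p g X
    have h2 : p ∣ p.comp g - p.comp X := hg.trans h1
    have h3 : p.comp g = (p.comp g - p.comp X) + p := by rw [comp_X]; ring
    rw [h3]
    exact dvd_add h2 dvd_rfl
  intro m
  induction m with
  | zero => exact ⟨X, by simp, by simpa using key X (by simp)⟩
  | succ m ih =>
    obtain ⟨g, hg1, hg2⟩ := ih
    obtain ⟨u, v, huv⟩ := hco
    refine ⟨g - v.comp g * p.comp g, ?_, ?_⟩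
    · have hpc : p ∣ v.comp g * p.comp g := Dvd.dvd.mul_left (key g hg1) _
      have h : g - v.comp g * p.comp g - X = (g - X) - v.comp g * p.comp g := by ring
      rw [h]
      exact dvd_sub hg1 hpc
    · obtain ⟨K, hK⟩ := (p.map C).binomExpansion g (-(v.comp g * p.comp g))
      have hmape : ∀ z : k[X], (p.map C).eval z = p.comp z := by
        intro z; rw [eval_map]; rfl
      have hmapd : (p.map C).derivative.eval g = (derivative p).comp g := by
        rw [derivative_map, eval_map]; rfl
      rw [hmape, hmape, hmapd] at hK
      have hone : u.comp g * p.comp g + v.comp g * (derivative p).comp g = 1 := by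
        have h := congrArg (fun q => q.comp g) huv
        simpa [add_comp, mul_comp] using h
      have hexp : p.comp (g - v.comp g * p.comp g) =
          (p.comp g) ^ 2 * (u.comp g + K * (v.comp g) ^ 2) := by
        have h : g - v.comp g * p.comp g = g + -(v.comp g * p.comp g) := by ring
        rw [h, hK]
        linear_combination (-(p.comp g)) * hone
      rw [hexp]
      have h2 : p ^ (m + 1 + 1) ∣ (p.comp g) ^ 2 := by
        calc p ^ (m + 1 + 1) ∣ p ^ (2 * (m + 1)) := pow_dvd_pow p (by omega)
        _ = (p ^ (m + 1)) ^ 2 := by rw [← pow_mul, mul_comm]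
        _ ∣ (p.comp g) ^ 2 := pow_dvd_pow_of_dvd hg2 2
      exact h2.mul_right _

private lemma padic_expand' {k : Type*} [Field k] {p : k[X]} (hpm : p.Monic) :
    ∀ n : ℕ, ∀ h : k[X], ∃ r : Fin n → k[X],
      (∀ j, (r j).degree < p.degree) ∧ p ^ n ∣ h - ∑ j, r j * p ^ (j : ℕ) := by
  intro n
  induction n with
  | zero => exact fun h => ⟨fun j => j.elim0, fun j => j.elim0, by simp⟩
  | succ n ih =>
    intro h
    obtain ⟨r', hr'deg, hr'dvd⟩ := ih (h /ₘ p)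
    refine ⟨(Fin.cons (h %ₘ p) r' : Fin (n+1) → k[X]), ?_, ?_⟩
    · intro j
      induction j using Fin.cases with
      | zero => simpa using degree_modByMonic_lt h hpm
      | succ i => simpa using hr'deg i
    · have hdm : h %ₘ p + p * (h /ₘ p) = h := modByMonic_add_div h p
      have hsum : ∑ j : Fin (n + 1), (Fin.cons (h %ₘ p) r' : Fin (n+1) → k[X]) j * p ^ (j : ℕ)
          = h %ₘ p + p * ∑ j : Fin n, r' j * p ^ (j : ℕ) := by
        rw [Fin.sum_univ_succ]
        simp only [Fin.cons_zero, Fin.cons_succ, Fin.val_zero, pow_zero, mul_one, Fin.val_succ]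
        rw [Finset.mul_sum]
        exact congrArg (h %ₘ p + ·) (Finset.sum_congr rfl fun i _ => by ring)
      rw [hsum]
      have heq : h - (h %ₘ p + p * ∑ j : Fin n, r' j * p ^ (j : ℕ))
          = p * (h /ₘ p - ∑ j : Fin n, r' j * p ^ (j : ℕ)) := by
        linear_combination -hdm
      rw [heq, pow_succ, mul_comm (p ^ n) p]
      exact mul_dvd_mul_left p hr'dvd

private lemma squarefree_quot' {k : Type*} [Field k] [DecidableEq k] {χ p : k[X]}
    (hχ0 : χ ≠ 0) (hmul : p * gcd χ (derivative χ) = χ) : Squarefree p := by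
  classical
  intro q hq
  by_contra hqu
  have hp0 : p ≠ 0 := fun h => hχ0 (by rw [← hmul, h, zero_mul])
  have hq0 : q ≠ 0 := by
    rintro rfl
    exact hp0 (eq_zero_of_zero_dvd (by simpa using hq))
  obtain ⟨q₀, hq₀irr, hq₀dvd⟩ := WfDvdMonoid.exists_irreducible_factor hqu hq0
  have h2p : q₀ ^ 2 ∣ p := by
    rw [pow_two]
    exact (mul_dvd_mul hq₀dvd hq₀dvd).trans hq
  have hpχ : p ∣ χ := ⟨gcd χ (derivative χ), hmul.symm⟩
  have hbound : ∀ n : ℕ, q₀ ^ n ∣ χ → n ≤ χ.natDegree := by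
    intro n hn
    have h1 := Polynomial.natDegree_le_of_dvd hn hχ0
    have h2 : 1 ≤ q₀.natDegree := hq₀irr.natDegree_pos
    rw [natDegree_pow] at h1
    calc n = n * 1 := (mul_one n).symm
    _ ≤ n * q₀.natDegree := Nat.mul_le_mul_left n h2
    _ ≤ χ.natDegree := h1
  have hP2 : q₀ ^ 2 ∣ χ := h2p.trans hpχ
  set m := Nat.findGreatest (fun n => q₀ ^ n ∣ χ) χ.natDegree with hmdef
  have hm2 : 2 ≤ m := Nat.le_findGreatest (P := fun n => q₀ ^ n ∣ χ) (hbound 2 hP2) hP2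
  have hm : q₀ ^ m ∣ χ := Nat.findGreatest_spec (P := fun n => q₀ ^ n ∣ χ) (hbound 2 hP2) hP2
  have hd : q₀ ^ (m - 1) ∣ derivative χ := pow_sub_one_dvd_derivative_of_pow_dvd hm
  have hg : q₀ ^ (m - 1) ∣ gcd χ (derivative χ) :=
    dvd_gcd ((pow_dvd_pow q₀ (Nat.sub_le m 1)).trans hm) hd
  have hbig : q₀ ^ (m + 1) ∣ χ := by
    have h3 := mul_dvd_mul h2p hg
    rw [← pow_add, hmul] at h3
    have he : 2 + (m - 1) = m + 1 := by omega
    rwa [he] at h3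
  have h4 : m + 1 ≤ m := Nat.le_findGreatest (P := fun n => q₀ ^ n ∣ χ) (hbound (m + 1) hbig) hbig
  omega

/-- Let `p` be the square-free part of the characteristic polynomial `χ_A`
of `A`, and let `M` be the least positive integer with `χ_A ∣ p ^ M`. Then there are
polynomials `r_1, …, r_(M-1)`, each of degree `< deg p`, such that
`S = A + Σ_{j=1}^{M-1} r_j(A) p(A)^j` satisfies `p(S) = 0`; consequently `S` is semisimple,
`S` commutes with `A`, and `N = A - S` is nilpotent, so `A = S + N` is the Jordan–Chevalley
decomposition of `A`, with both `S` and `N` polynomials in `A`. -/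
theorem stmt_8 {k V : Type*} [Field k] [CharZero k] [DecidableEq k] [AddCommGroup V]
    [Module k V] [FiniteDimensional k V] (A : V →ₗ[k] V) (p : k[X])
    (hp : p = A.charpoly / gcd A.charpoly A.charpoly.derivative)
    (M : ℕ) (hM : 0 < M) (hdvd : A.charpoly ∣ p ^ M)
    (hleast : ∀ M' : ℕ, 0 < M' → A.charpoly ∣ p ^ M' → M ≤ M') :
    ∃ (r : Fin (M - 1) → k[X]) (S : V →ₗ[k] V),
      (∀ j, (r j).degree < p.degree) ∧
      S = A + ∑ j : Fin (M - 1), aeval A (r j) * (aeval A p) ^ ((j : ℕ) + 1) ∧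
      aeval S p = 0 ∧
      (∀ U : Submodule k V, (∀ x ∈ U, S x ∈ U) →
        ∃ W : Submodule k V, (∀ x ∈ W, S x ∈ W) ∧ IsCompl U W) ∧
      Commute S A ∧
      IsNilpotent (A - S) ∧
      (∃ qS : k[X], S = aeval A qS) ∧ (∃ qN : k[X], A - S = aeval A qN) := by
  classical
  have hχm : A.charpoly.Monic := A.charpoly_monic
  have hχ0 : A.charpoly ≠ 0 := hχm.ne_zero
  have hg0 : gcd A.charpoly A.charpoly.derivative ≠ 0 := by
    simp [gcd_eq_zero_iff, hχ0]
  have hgm : (gcd A.charpoly A.charpoly.derivative).Monic := by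
    have h := monic_normalize (p := gcd A.charpoly A.charpoly.derivative) hg0
    rwa [normalize_gcd] at h
  have hmul : p * gcd A.charpoly A.charpoly.derivative = A.charpoly := by
    rw [hp, mul_comm]
    exact EuclideanDomain.mul_div_cancel' hg0 (gcd_dvd_left _ _)
  have hpm : p.Monic := hgm.of_mul_monic_right (hmul.symm ▸ hχm)
  have hsf : Squarefree p := squarefree_quot' hχ0 hmul
  have hco : IsCoprime p (derivative p) :=
    (PerfectField.separable_iff_squarefree).mpr hsf
  obtain ⟨gN, hgN1, hgN2⟩ := newton_lift' hco (M - 1)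
  have hM1 : M - 1 + 1 = M := Nat.succ_pred_eq_of_pos hM
  rw [hM1] at hgN2
  obtain ⟨h, hh⟩ := hgN1
  obtain ⟨r, hrdeg, hrdvd⟩ := padic_expand' hpm (M - 1) h
  set w : k[X] := ∑ j : Fin (M - 1), r j * p ^ (j : ℕ) with hw
  set g₀ : k[X] := X + p * w with hg₀
  have hpw : p * w = ∑ j : Fin (M - 1), r j * p ^ ((j : ℕ) + 1) := by
    rw [hw, Finset.mul_sum]
    exact Finset.sum_congr rfl fun i _ => by ring
  have hSdef : aeval A g₀ = A + ∑ j : Fin (M - 1),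
      aeval A (r j) * (aeval A p) ^ ((j : ℕ) + 1) := by
    rw [hg₀, map_add, aeval_X, hpw, map_sum]
    simp only [map_mul, map_pow]
  have hdiff : p ^ M ∣ g₀ - gN := by
    have h1 : g₀ - gN = -(p * (h - w)) := by
      rw [hg₀]; linear_combination -hh
    rw [h1, dvd_neg, ← hM1, pow_succ']
    exact mul_dvd_mul_left p hrdvd
  have hcomp : p ^ M ∣ p.comp g₀ := by
    have h2 : p ^ M ∣ p.comp g₀ - p.comp gN := hdiff.trans (comp_sub_dvd' p g₀ gN)
    have h3 := dvd_add h2 hgN2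
    simpa using h3
  have hPS0 : aeval (aeval A g₀) p = 0 := by
    rw [← aeval_comp]
    obtain ⟨t, ht⟩ := hdvd.trans hcomp
    rw [ht, map_mul, A.aeval_self_charpoly, zero_mul]
  refine ⟨r, aeval A g₀, hrdeg, hSdef, hPS0, ?_, ?_, ?_, ⟨g₀, rfl⟩,
    ⟨X - g₀, by rw [map_sub, aeval_X]⟩⟩
  · have hss := Module.End.isSemisimple_of_squarefree_aeval_eq_zero hsf hPS0
    intro U hU
    obtain ⟨W, hW1, hW2⟩ := Module.End.isSemisimple_iff.mp hss U
      ((Module.End.mem_invtSubmodule (aeval A g₀)).mpr fun x hx => hU x hx)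
    exact ⟨W, fun x hx => (Module.End.mem_invtSubmodule (aeval A g₀)).mp hW1 hx, hW2⟩
  · have hc := (Commute.all g₀ X).map (aeval A)
    rwa [aeval_X] at hc
  · have hnil : IsNilpotent (aeval A (p * w)) := by
      refine ⟨M, ?_⟩
      rw [← map_pow]
      obtain ⟨t, ht⟩ : A.charpoly ∣ (p * w) ^ M := by
        rw [mul_pow]
        exact hdvd.trans (dvd_mul_right _ _)
      rw [ht, map_mul, A.aeval_self_charpoly, zero_mul]
    have heq : A - aeval A g₀ = -(aeval A (p * w)) := by
      rw [hg₀, map_add, aeval_X]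
      abel
    rw [heq]
    exact hnil.neg
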